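/- arXiv:1611.05903 — 2 statements merged into one kernel-verified Lean document; each statement's English description precedes it below -/
import Mathlib

section
/- Let q be a symmetric positive definite n×n real matrix, κ ∈ ℝⁿ, β ∈ ℝⁿ, and let μ be a probability measure on Y = ℝ^d. Suppose α₁, α₂ : Y → ℝ^{n×m} satisfy ∫_Y (α₁(y)α₁(y)ᵀ + α₂(y)α₂(y)ᵀ) dμ(y) = q. Then over all measurable v = (v₁, v₂) : Y → ℝ^m × ℝ^m with ∫|v|² dμ < ∞ satisfying the constraint β = κ + ∫_Y (α₁(y)v₁(y) + α₂(y)v₂(y)) dμ(y), the infimum of (1/2)∫_Y |v(y)|² dμ(y) equals (1/2)(β − κ)ᵀ q⁻¹ (β − κ), and it is attained by v₁(y) = α₁(y)ᵀ q⁻¹(β − κ), v₂(y) = α₂(y)ᵀ q⁻¹(β − κ). -/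
open MeasureTheory Matrix

private lemma key1 {n m : ℕ} (α : Matrix (Fin n) (Fin m) ℝ) (w : Fin n → ℝ) :
    ∑ j, ((αᵀ *ᵥ w) j)^2 = ∑ i, ∑ i', w i * w i' * (∑ k, α i k * α i' k) := by
  have h : ∀ j, ((αᵀ *ᵥ w) j)^2 = ∑ i, ∑ i', (α i j * w i) * (α i' j * w i') := by
    intro j
    rw [pow_two]
    simp only [Matrix.mulVec, dotProduct, Matrix.transpose_apply, Finset.sum_mul_sum]
  simp only [h, Finset.mul_sum]
  rw [Finset.sum_comm]
  refine Finset.sum_congr rfl fun i _ => ?_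
  rw [Finset.sum_comm]
  exact Finset.sum_congr rfl fun i' _ => Finset.sum_congr rfl fun k _ => by ring

private lemma key2 {n m : ℕ} (α : Matrix (Fin n) (Fin m) ℝ) (w : Fin n → ℝ) (i : Fin n) :
    (α *ᵥ (αᵀ *ᵥ w)) i = ∑ i', w i' * (∑ k, α i k * α i' k) := by
  simp only [Matrix.mulVec, dotProduct, Matrix.transpose_apply, Finset.mul_sum]
  rw [Finset.sum_comm]
  exact Finset.sum_congr rfl fun i' _ => Finset.sum_congr rfl fun k _ => by ring

private lemma key3 {n m : ℕ} (α : Matrix (Fin n) (Fin m) ℝ) (w : Fin n → ℝ) (v : Fin m → ℝ) :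
    ∑ j, (αᵀ *ᵥ w) j * v j = ∑ i, w i * (α *ᵥ v) i := by
  simp only [Matrix.mulVec, dotProduct, Matrix.transpose_apply, Finset.sum_mul,
    Finset.mul_sum]
  rw [Finset.sum_comm]
  exact Finset.sum_congr rfl fun i _ => Finset.sum_congr rfl fun j _ => by ring

private lemma absle {m : ℕ} (a v : Fin m → ℝ) :
    |∑ k, a k * v k| ≤ (∑ k, a k * a k + ∑ k, v k * v k) / 2 := by
  calc |∑ k, a k * v k| ≤ ∑ k, |a k * v k| := Finset.abs_sum_le_sum_abs _ _
    _ ≤ ∑ k, (a k * a k + v k * v k) / 2 := by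
        refine Finset.sum_le_sum fun k _ => abs_le.2 ⟨?_, ?_⟩
        · nlinarith [sq_nonneg (a k + v k)]
        · nlinarith [sq_nonneg (a k - v k)]
    _ = _ := by rw [← Finset.sum_div, Finset.sum_add_distrib]

private lemma sum_sq_sub {m : ℕ} (a b : Fin m → ℝ) :
    ∑ j, (a j - b j)^2 = ∑ j, (a j)^2 - 2*(∑ j, b j * a j) + ∑ j, (b j)^2 := by
  rw [Finset.mul_sum, ← Finset.sum_sub_distrib, ← Finset.sum_add_distrib]
  exact Finset.sum_congr rfl fun j _ => by ring

theorem stmt1 {n m d : ℕ}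
    (q : Matrix (Fin n) (Fin n) ℝ) (hq : q.PosDef)
    (κ β : Fin n → ℝ)
    (μ : Measure (Fin d → ℝ)) (hμ : IsProbabilityMeasure μ)
    (α₁ α₂ : (Fin d → ℝ) → Matrix (Fin n) (Fin m) ℝ)
    (hα₁ : ∀ i k, Measurable (fun y => α₁ y i k)) (hα₂ : ∀ i k, Measurable (fun y => α₂ y i k))
    (hq' : ∀ i j, q i j =
      ∫ y, (∑ k, α₁ y i k * α₁ y j k + ∑ k, α₂ y i k * α₂ y j k) ∂μ) :
    (∀ v₁ v₂ : (Fin d → ℝ) → (Fin m → ℝ), Measurable v₁ → Measurable v₂ →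
      Integrable (fun y => ∑ j, (v₁ y j)^2 + ∑ j, (v₂ y j)^2) μ →
      (∀ i, β i = κ i + ∫ y, ((α₁ y *ᵥ v₁ y) i + (α₂ y *ᵥ v₂ y) i) ∂μ) →
      (1/2) * ((β - κ) ⬝ᵥ (q⁻¹ *ᵥ (β - κ)))
        ≤ (1/2) * ∫ y, (∑ j, (v₁ y j)^2 + ∑ j, (v₂ y j)^2) ∂μ) ∧
    ((∀ j, Measurable (fun y => ((α₁ y)ᵀ *ᵥ (q⁻¹ *ᵥ (β - κ))) j)) ∧
     (∀ j, Measurable (fun y => ((α₂ y)ᵀ *ᵥ (q⁻¹ *ᵥ (β - κ))) j)) ∧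
     Integrable (fun y => ∑ j, (((α₁ y)ᵀ *ᵥ (q⁻¹ *ᵥ (β - κ))) j)^2
        + ∑ j, (((α₂ y)ᵀ *ᵥ (q⁻¹ *ᵥ (β - κ))) j)^2) μ ∧
     (∀ i, β i = κ i + ∫ y, ((α₁ y *ᵥ ((α₁ y)ᵀ *ᵥ (q⁻¹ *ᵥ (β - κ)))) i
        + (α₂ y *ᵥ ((α₂ y)ᵀ *ᵥ (q⁻¹ *ᵥ (β - κ)))) i) ∂μ) ∧
     (1/2) * ∫ y, (∑ j, (((α₁ y)ᵀ *ᵥ (q⁻¹ *ᵥ (β - κ))) j)^2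
        + ∑ j, (((α₂ y)ᵀ *ᵥ (q⁻¹ *ᵥ (β - κ))) j)^2) ∂μ
       = (1/2) * ((β - κ) ⬝ᵥ (q⁻¹ *ᵥ (β - κ)))) := by
  set w : Fin n → ℝ := q⁻¹ *ᵥ (β - κ) with hw
  have hqw : q *ᵥ w = β - κ := by
    rw [hw, Matrix.mulVec_mulVec,
      Matrix.mul_nonsing_inv _ (isUnit_iff_ne_zero.2 hq.det_pos.ne'), Matrix.one_mulVec]
  -- diagonal positivity
  have hdiag : ∀ i, 0 < q i i := by
    intro i
    have hne : (Pi.single i 1 : Fin n → ℝ) ≠ 0 := by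
      intro h
      simpa using congrFun h i
    have h := hq.dotProduct_mulVec_pos hne
    simpa [Matrix.mulVec_single, single_dotProduct] using h
  -- entries of the matrix integrand
  set B : Fin n → Fin n → (Fin d → ℝ) → ℝ :=
    fun i i' y => (∑ k, α₁ y i k * α₁ y i' k) + ∑ k, α₂ y i k * α₂ y i' k with hB
  have hBmeas : ∀ i i', Measurable (B i i') := by
    intro i i'
    exact (Finset.measurable_sum _ fun k _ => (hα₁ i k).mul (hα₁ i' k)).add
      (Finset.measurable_sum _ fun k _ => (hα₂ i k).mul (hα₂ i' k))
  have hint_q : ∀ i i', ∫ y, B i i' y ∂μ = q i i' := fun i i' => (hq' i i').symm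
  have hAint : ∀ i, Integrable (B i i) μ := by
    intro i
    by_contra h
    have h0 := MeasureTheory.integral_undef h
    have h2 := hint_q i i
    rw [h0] at h2
    exact absurd h2 (hdiag i).ne
  have hBbound : ∀ i i' y, |B i i' y| ≤ (B i i y + B i' i' y) / 2 := by
    intro i i' y
    have h1 := absle (fun k => α₁ y i k) (fun k => α₁ y i' k)
    have h2 := absle (fun k => α₂ y i k) (fun k => α₂ y i' k)
    simp only [hB]
    calc |(∑ k, α₁ y i k * α₁ y i' k) + ∑ k, α₂ y i k * α₂ y i' k|
        ≤ |∑ k, α₁ y i k * α₁ y i' k| + |∑ k, α₂ y i k * α₂ y i' k| := abs_add_le _ _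
      _ ≤ _ := by linarith
  have hBint : ∀ i i', Integrable (B i i') μ := fun i i' =>
    Integrable.mono' (((hAint i).add (hAint i')).div_const 2)
      (hBmeas i i').aestronglyMeasurable (ae_of_all _ fun y => hBbound i i' y)
  -- pointwise identity for the optimal control's squared norm
  have hptF : (fun y => ∑ j, (((α₁ y)ᵀ *ᵥ w) j)^2 + ∑ j, (((α₂ y)ᵀ *ᵥ w) j)^2)
      = fun y => ∑ i, ∑ i', w i * w i' * B i i' y := by
    funext y
    rw [key1, key1, ← Finset.sum_add_distrib]
    refine Finset.sum_congr rfl fun i _ => ?_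
    rw [← Finset.sum_add_distrib]
    refine Finset.sum_congr rfl fun i' _ => ?_
    simp only [hB]; ring
  have hcint : ∀ (i i' : Fin n), Integrable (fun y => w i * w i' * B i i' y) μ :=
    fun i i' => (hBint i i').const_mul _
  have hFint : Integrable (fun y => ∑ j, (((α₁ y)ᵀ *ᵥ w) j)^2
      + ∑ j, (((α₂ y)ᵀ *ᵥ w) j)^2) μ := by
    rw [hptF]
    exact integrable_finset_sum _ fun i _ => integrable_finset_sum _ fun i' _ => hcint i i'
  have hIF : ∫ y, (∑ j, (((α₁ y)ᵀ *ᵥ w) j)^2 + ∑ j, (((α₂ y)ᵀ *ᵥ w) j)^2) ∂μ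
      = (β - κ) ⬝ᵥ w := by
    rw [hptF,
      MeasureTheory.integral_finset_sum _ (fun i _ =>
        integrable_finset_sum _ fun i' _ => hcint i i')]
    have h1 : ∀ i : Fin n, (∫ y, ∑ i', w i * w i' * B i i' y ∂μ)
        = ∑ i', w i * w i' * q i i' := by
      intro i
      rw [MeasureTheory.integral_finset_sum _ (fun i' _ => hcint i i')]
      exact Finset.sum_congr rfl fun i' _ => by
        rw [MeasureTheory.integral_const_mul, hint_q]
    simp only [h1]
    have h2 : w ⬝ᵥ (q *ᵥ w) = ∑ i, ∑ i', w i * w i' * q i i' := by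
      simp only [dotProduct, Matrix.mulVec, Finset.mul_sum]
      exact Finset.sum_congr rfl fun i _ => Finset.sum_congr rfl fun i' _ => by ring
    rw [← h2, hqw, dotProduct_comm]
  have hconstr : ∀ i, ∫ y, ((α₁ y *ᵥ ((α₁ y)ᵀ *ᵥ w)) i + (α₂ y *ᵥ ((α₂ y)ᵀ *ᵥ w)) i) ∂μ
      = β i - κ i := by
    intro i
    have hpt : (fun y => (α₁ y *ᵥ ((α₁ y)ᵀ *ᵥ w)) i + (α₂ y *ᵥ ((α₂ y)ᵀ *ᵥ w)) i)
        = fun y => ∑ i', w i' * B i i' y := by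
      funext y
      rw [key2, key2, ← Finset.sum_add_distrib]
      refine Finset.sum_congr rfl fun i' _ => ?_
      simp only [hB]; ring
    rw [hpt, MeasureTheory.integral_finset_sum _ (fun i' _ => (hBint i i').const_mul _)]
    have h3 : ∀ i' : Fin n, (∫ y, w i' * B i i' y ∂μ) = w i' * q i i' := fun i' => by
      rw [MeasureTheory.integral_const_mul, hint_q]
    simp only [h3]
    have h4 : (q *ᵥ w) i = ∑ i', w i' * q i i' := by
      simp only [Matrix.mulVec, dotProduct]
      exact Finset.sum_congr rfl fun i' _ => by ring
    rw [← h4, hqw, Pi.sub_apply]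
  have hmeas1 : ∀ j, Measurable fun y => ((α₁ y)ᵀ *ᵥ w) j := by
    intro j
    simp only [Matrix.mulVec, dotProduct, Matrix.transpose_apply]
    exact Finset.measurable_sum _ fun i _ => (hα₁ i j).mul_const _
  have hmeas2 : ∀ j, Measurable fun y => ((α₂ y)ᵀ *ᵥ w) j := by
    intro j
    simp only [Matrix.mulVec, dotProduct, Matrix.transpose_apply]
    exact Finset.measurable_sum _ fun i _ => (hα₂ i j).mul_const _
  refine ⟨?_, hmeas1, hmeas2, hFint, fun i => by rw [hconstr i]; ring, by rw [hIF]⟩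
  intro v₁ v₂ hm1 hm2 hVint hcon
  have hgmeas : ∀ i, Measurable fun y => (α₁ y *ᵥ v₁ y) i + (α₂ y *ᵥ v₂ y) i := by
    intro i
    simp only [Matrix.mulVec, dotProduct]
    exact (Finset.measurable_sum _ fun k _ =>
        (hα₁ i k).mul ((measurable_pi_apply k).comp hm1)).add
      (Finset.measurable_sum _ fun k _ => (hα₂ i k).mul ((measurable_pi_apply k).comp hm2))
  have hgbound : ∀ i y, |(α₁ y *ᵥ v₁ y) i + (α₂ y *ᵥ v₂ y) i|
      ≤ (B i i y + (∑ j, (v₁ y j)^2 + ∑ j, (v₂ y j)^2)) / 2 := by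
    intro i y
    have h1 := absle (fun k => α₁ y i k) (v₁ y)
    have h2 := absle (fun k => α₂ y i k) (v₂ y)
    have e1 : (α₁ y *ᵥ v₁ y) i = ∑ k, α₁ y i k * v₁ y k := rfl
    have e2 : (α₂ y *ᵥ v₂ y) i = ∑ k, α₂ y i k * v₂ y k := rfl
    rw [e1, e2]
    calc |(∑ k, α₁ y i k * v₁ y k) + ∑ k, α₂ y i k * v₂ y k|
        ≤ |∑ k, α₁ y i k * v₁ y k| + |∑ k, α₂ y i k * v₂ y k| := abs_add_le _ _
      _ ≤ _ := by
          simp only [hB, pow_two]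
          linarith
  have hgint : ∀ i, Integrable (fun y => (α₁ y *ᵥ v₁ y) i + (α₂ y *ᵥ v₂ y) i) μ := fun i =>
    Integrable.mono' (((hAint i).add hVint).div_const 2) (hgmeas i).aestronglyMeasurable
      (ae_of_all _ fun y => hgbound i y)
  have hgI : ∀ i, ∫ y, ((α₁ y *ᵥ v₁ y) i + (α₂ y *ᵥ v₂ y) i) ∂μ = β i - κ i := fun i => by
    rw [hcon i]; ring
  have hfint : Integrable (fun y => ∑ i, w i * ((α₁ y *ᵥ v₁ y) i + (α₂ y *ᵥ v₂ y) i)) μ :=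
    integrable_finset_sum _ fun i _ => (hgint i).const_mul _
  have hfI : ∫ y, (∑ i, w i * ((α₁ y *ᵥ v₁ y) i + (α₂ y *ᵥ v₂ y) i)) ∂μ = (β - κ) ⬝ᵥ w := by
    rw [MeasureTheory.integral_finset_sum _ fun i _ => (hgint i).const_mul _]
    have h5 : ∀ i : Fin n, (∫ y, w i * ((α₁ y *ᵥ v₁ y) i + (α₂ y *ᵥ v₂ y) i) ∂μ)
        = w i * (β i - κ i) := fun i => by rw [MeasureTheory.integral_const_mul, hgI]
    simp only [h5, dotProduct, Pi.sub_apply]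
    exact Finset.sum_congr rfl fun i _ => by ring
  have hpt2 : ∀ y, 2 * (∑ i, w i * ((α₁ y *ᵥ v₁ y) i + (α₂ y *ᵥ v₂ y) i))
      - (∑ j, (((α₁ y)ᵀ *ᵥ w) j)^2 + ∑ j, (((α₂ y)ᵀ *ᵥ w) j)^2)
      ≤ ∑ j, (v₁ y j)^2 + ∑ j, (v₂ y j)^2 := by
    intro y
    have h0 : (0:ℝ) ≤ ∑ j, (v₁ y j - ((α₁ y)ᵀ *ᵥ w) j)^2
        + ∑ j, (v₂ y j - ((α₂ y)ᵀ *ᵥ w) j)^2 :=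
      add_nonneg (Finset.sum_nonneg fun j _ => sq_nonneg _)
        (Finset.sum_nonneg fun j _ => sq_nonneg _)
    rw [sum_sq_sub, sum_sq_sub] at h0
    have hc1 := key3 (α₁ y) w (v₁ y)
    have hc2 := key3 (α₂ y) w (v₂ y)
    have hsum : ∑ i, w i * ((α₁ y *ᵥ v₁ y) i + (α₂ y *ᵥ v₂ y) i)
        = (∑ j, ((α₁ y)ᵀ *ᵥ w) j * v₁ y j) + ∑ j, ((α₂ y)ᵀ *ᵥ w) j * v₂ y j := by
      rw [hc1, hc2, ← Finset.sum_add_distrib]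
      exact Finset.sum_congr rfl fun i _ => by ring
    rw [hsum]
    linarith
  have hmono := MeasureTheory.integral_mono ((hfint.const_mul 2).sub hFint) hVint hpt2
  simp only [Pi.sub_apply] at hmono
  rw [MeasureTheory.integral_sub (hfint.const_mul 2) hFint,
    MeasureTheory.integral_const_mul, hfI, hIF] at hmono
  linarith
end

section
/- Fix x, η ∈ ℝⁿ and β ∈ ℝⁿ. Let θ(x,η,y,z₁,z₂) be affine in (z₁,z₂). Then the relaxed-control infimum L^{rel}(x,η,β) = inf over probability measures P on Z×Z×Y with ∫ L_x F dP = 0 for all F ∈ C²(Y), finite second moments, and β = ∫ θ dP, of (1/2)∫(|z₁|²+|z₂|²) dP, is greater than or equal to the ordinary-control infimum L^o(x,η,β) obtained by restricting to P of the form δ_{(v₁(y),v₂(y))}(dz₁ dz₂) μ(dy); conversely L^o ≥ L^{rel}, so L^{rel} = L^o. The inequality L^{rel} ≥ L^o follows by replacing ν(dz₁dz₂|y) with its mean v(y) = ∫ (z₁,z₂) ν(dz|y), using Jensen's inequality and affinity of θ in (z₁,z₂). -/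
open MeasureTheory Matrix

lemma jensen_sq {α : Type*} [MeasurableSpace α] (ν : Measure α) [IsProbabilityMeasure ν]
    {f : α → ℝ} (hf : Integrable f ν) (hf2 : Integrable (fun x => (f x)^2) ν) :
    (∫ x, f x ∂ν)^2 ≤ ∫ x, (f x)^2 ∂ν := by
  set c := ∫ x, f x ∂ν with hc
  have h0 : 0 ≤ ∫ x, (f x - c)^2 ∂ν := integral_nonneg fun x => sq_nonneg _
  have hfc : Integrable (fun x => 2*c*f x) ν := hf.const_mul _
  have hsum : Integrable (fun x => (f x)^2 + c^2) ν := hf2.add (integrable_const _)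
  have e1 : ∫ x, (f x - c)^2 ∂ν = (∫ x, ((f x)^2 + c^2) ∂ν) - ∫ x, 2*c*f x ∂ν := by
    rw [← integral_sub hsum hfc]
    congr 1; funext x; ring
  rw [e1, integral_add hf2 (integrable_const _), integral_const, integral_const_mul,
    probReal_univ] at h0
  simp only [ENNReal.toReal_one, smul_eq_mul, one_mul, ← hc] at h0
  nlinarith [h0]

lemma abs_le_one_add_sq (x : ℝ) : |x| ≤ 1 + x^2 := by
  nlinarith [sq_nonneg (|x| - 1), sq_abs x, abs_nonneg x]

lemma coord_facts {m : ℕ} (ν : Measure ((Fin m → ℝ) × (Fin m → ℝ))) [IsProbabilityMeasure ν]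
    (h : Integrable (fun z => ∑ j, (z.1 j)^2 + ∑ j, (z.2 j)^2) ν) :
    (∀ j, Integrable (fun z : (Fin m → ℝ) × (Fin m → ℝ) => z.1 j) ν) ∧
    (∀ j, Integrable (fun z : (Fin m → ℝ) × (Fin m → ℝ) => z.2 j) ν) ∧
    (∑ j, (∫ z, z.1 j ∂ν)^2 + ∑ j, (∫ z, z.2 j ∂ν)^2
      ≤ ∫ z, (∑ j, (z.1 j)^2 + ∑ j, (z.2 j)^2) ∂ν) := by
  have hbnd : ∀ (z : (Fin m → ℝ) × (Fin m → ℝ)) (j : Fin m),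
      (z.1 j)^2 ≤ ∑ j, (z.1 j)^2 + ∑ j, (z.2 j)^2 ∧
      (z.2 j)^2 ≤ ∑ j, (z.1 j)^2 + ∑ j, (z.2 j)^2 := by
    intro z j
    have h1 : (z.1 j)^2 ≤ ∑ j, (z.1 j)^2 :=
      Finset.single_le_sum (fun i _ => sq_nonneg (z.1 i)) (Finset.mem_univ j)
    have h2 : (z.2 j)^2 ≤ ∑ j, (z.2 j)^2 :=
      Finset.single_le_sum (fun i _ => sq_nonneg (z.2 i)) (Finset.mem_univ j)
    have h3 : (0:ℝ) ≤ ∑ j, (z.1 j)^2 := Finset.sum_nonneg fun i _ => sq_nonneg _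
    have h4 : (0:ℝ) ≤ ∑ j, (z.2 j)^2 := Finset.sum_nonneg fun i _ => sq_nonneg _
    constructor <;> linarith
  have h1sq : ∀ j, Integrable (fun z : (Fin m → ℝ) × (Fin m → ℝ) => (z.1 j)^2) ν := by
    intro j
    refine h.mono' (((measurable_pi_apply j).comp measurable_fst).pow_const 2).aestronglyMeasurable ?_
    filter_upwards with z
    rw [Real.norm_eq_abs, abs_of_nonneg (sq_nonneg _)]
    exact (hbnd z j).1
  have h2sq : ∀ j, Integrable (fun z : (Fin m → ℝ) × (Fin m → ℝ) => (z.2 j)^2) ν := by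
    intro j
    refine h.mono' (((measurable_pi_apply j).comp measurable_snd).pow_const 2).aestronglyMeasurable ?_
    filter_upwards with z
    rw [Real.norm_eq_abs, abs_of_nonneg (sq_nonneg _)]
    exact (hbnd z j).2
  have h1l : ∀ j, Integrable (fun z : (Fin m → ℝ) × (Fin m → ℝ) => z.1 j) ν := by
    intro j
    refine ((integrable_const (1:ℝ)).add (h1sq j)).mono'
      ((measurable_pi_apply j).comp measurable_fst).aestronglyMeasurable ?_
    filter_upwards with z
    exact (Real.norm_eq_abs _).le.trans ((abs_le_one_add_sq _).trans le_rfl)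
  have h2l : ∀ j, Integrable (fun z : (Fin m → ℝ) × (Fin m → ℝ) => z.2 j) ν := by
    intro j
    refine ((integrable_const (1:ℝ)).add (h2sq j)).mono'
      ((measurable_pi_apply j).comp measurable_snd).aestronglyMeasurable ?_
    filter_upwards with z
    exact (Real.norm_eq_abs _).le.trans ((abs_le_one_add_sq _).trans le_rfl)
  refine ⟨h1l, h2l, ?_⟩
  have hs1 : Integrable (fun z : (Fin m → ℝ) × (Fin m → ℝ) => ∑ j, (z.1 j)^2) ν :=
    integrable_finset_sum _ fun j _ => h1sq j
  have hs2 : Integrable (fun z : (Fin m → ℝ) × (Fin m → ℝ) => ∑ j, (z.2 j)^2) ν :=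
    integrable_finset_sum _ fun j _ => h2sq j
  rw [integral_add hs1 hs2, integral_finset_sum _ fun j _ => h1sq j,
    integral_finset_sum _ fun j _ => h2sq j]
  exact add_le_add
    (Finset.sum_le_sum fun j _ => jensen_sq ν (h1l j) (h1sq j))
    (Finset.sum_le_sum fun j _ => jensen_sq ν (h2l j) (h2sq j))

lemma integral_affine {m : ℕ} (ν : Measure ((Fin m → ℝ) × (Fin m → ℝ))) [IsProbabilityMeasure ν]
    (h1 : ∀ j, Integrable (fun z : (Fin m → ℝ) × (Fin m → ℝ) => z.1 j) ν)
    (h2 : ∀ j, Integrable (fun z : (Fin m → ℝ) × (Fin m → ℝ) => z.2 j) ν)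
    (a : ℝ) (b c : Fin m → ℝ) :
    ∫ z, (a + ∑ j, b j * z.1 j + ∑ j, c j * z.2 j) ∂ν
      = a + (∑ j, b j * ∫ z, z.1 j ∂ν) + ∑ j, c j * ∫ z, z.2 j ∂ν := by
  have hb : Integrable (fun z : (Fin m → ℝ) × (Fin m → ℝ) => ∑ j, b j * z.1 j) ν :=
    integrable_finset_sum _ fun j _ => (h1 j).const_mul _
  have hc : Integrable (fun z : (Fin m → ℝ) × (Fin m → ℝ) => ∑ j, c j * z.2 j) ν :=
    integrable_finset_sum _ fun j _ => (h2 j).const_mul _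
  have hab : Integrable (fun z : (Fin m → ℝ) × (Fin m → ℝ) => a + ∑ j, b j * z.1 j) ν :=
    (integrable_const a).add hb
  rw [integral_add hab hc, integral_add (integrable_const a) hb, integral_const,
    integral_finset_sum _ fun j _ => (h1 j).const_mul _,
    integral_finset_sum _ fun j _ => (h2 j).const_mul _, probReal_univ]
  simp [integral_const_mul]

lemma hard_dir {n m d : ℕ}
    (L : ((Fin d → ℝ) → ℝ) → ((Fin d → ℝ) → ℝ))
    (𝒞 : Set ((Fin d → ℝ) → ℝ))
    (θ : (Fin d → ℝ) → (Fin m → ℝ) → (Fin m → ℝ) → (Fin n → ℝ))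
    (θ₀ : (Fin d → ℝ) → Fin n → ℝ) (θ₁ θ₂ : (Fin d → ℝ) → Matrix (Fin n) (Fin m) ℝ)
    (hθ : ∀ y z₁ z₂, θ y z₁ z₂ = θ₀ y + θ₁ y *ᵥ z₁ + θ₂ y *ᵥ z₂)
    (β : Fin n → ℝ)
    (P : Measure ((Fin m → ℝ) × (Fin m → ℝ) × (Fin d → ℝ))) (hP : IsProbabilityMeasure P)
    (hI2 : Integrable (fun w => ∑ j, (w.1 j)^2 + ∑ j, (w.2.1 j)^2) P)
    (hL : ∀ F ∈ 𝒞, Integrable (fun w => L F w.2.2) P ∧ ∫ w, L F w.2.2 ∂P = 0)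
    (hθi : ∀ i, Integrable (fun w => θ w.2.2 w.1 w.2.1 i) P)
    (hθe : ∀ i, β i = ∫ w, θ w.2.2 w.1 w.2.1 i ∂P) :
    ∃ (μ : Measure (Fin d → ℝ)) (v₁ v₂ : (Fin d → ℝ) → (Fin m → ℝ)),
      IsProbabilityMeasure μ ∧ Measurable v₁ ∧ Measurable v₂ ∧
      Integrable (fun y => ∑ j, (v₁ y j)^2 + ∑ j, (v₂ y j)^2) μ ∧
      (∀ F ∈ 𝒞, Integrable (fun y => L F y) μ ∧ ∫ y, L F y ∂μ = 0) ∧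
      (∀ i, Integrable (fun y => θ y (v₁ y) (v₂ y) i) μ) ∧
      (∀ i, β i = ∫ y, θ y (v₁ y) (v₂ y) i ∂μ) ∧
      (1/2) * ∫ y, (∑ j, (v₁ y j)^2 + ∑ j, (v₂ y j)^2) ∂μ
        ≤ (1/2) * ∫ w, (∑ j, (w.1 j)^2 + ∑ j, (w.2.1 j)^2) ∂P := by
  haveI := hP
  set T : ((Fin m → ℝ) × (Fin m → ℝ) × (Fin d → ℝ)) ≃ᵐ
      ((Fin d → ℝ) × ((Fin m → ℝ) × (Fin m → ℝ))) :=
    (MeasurableEquiv.prodAssoc.symm).trans MeasurableEquiv.prodComm with hT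
  set ρ : Measure ((Fin d → ℝ) × ((Fin m → ℝ) × (Fin m → ℝ))) := P.map T with hρ
  haveI : IsProbabilityMeasure ρ := Measure.isProbabilityMeasure_map T.measurable.aemeasurable
  haveI : IsProbabilityMeasure ρ.fst := inferInstance
  -- cost transfer
  have hq : Integrable (fun p : (Fin d → ℝ) × ((Fin m → ℝ) × (Fin m → ℝ)) =>
      ∑ j, (p.2.1 j)^2 + ∑ j, (p.2.2 j)^2) ρ :=
    (integrable_map_equiv T _).2 hI2
  have hqe : ∫ p, (∑ j, (p.2.1 j)^2 + ∑ j, (p.2.2 j)^2) ∂ρ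
      = ∫ w, (∑ j, (w.1 j)^2 + ∑ j, (w.2.1 j)^2) ∂P :=
    integral_map_equiv T _
  -- the conditional means
  set v₁ : (Fin d → ℝ) → (Fin m → ℝ) := fun y j => ∫ z, z.1 j ∂(ρ.condKernel y) with hv₁def
  set v₂ : (Fin d → ℝ) → (Fin m → ℝ) := fun y j => ∫ z, z.2 j ∂(ρ.condKernel y) with hv₂def
  have hmv₁ : Measurable v₁ := measurable_pi_lambda _ fun j =>
      (StronglyMeasurable.integral_kernel_prod_right' (κ := ρ.condKernel)
        (((measurable_pi_apply j).comp (measurable_fst.comp measurable_snd)).stronglyMeasurable)).measurable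
  have hmv₂ : Measurable v₂ := measurable_pi_lambda _ fun j =>
      (StronglyMeasurable.integral_kernel_prod_right' (κ := ρ.condKernel)
        (((measurable_pi_apply j).comp (measurable_snd.comp measurable_snd)).stronglyMeasurable)).measurable
  have hGint : Integrable
      (fun y => ∫ z, (∑ j, (z.1 j)^2 + ∑ j, (z.2 j)^2) ∂(ρ.condKernel y)) ρ.fst :=
    hq.integral_condKernel
  have hGeq : ∫ y, (∫ z, (∑ j, (z.1 j)^2 + ∑ j, (z.2 j)^2) ∂(ρ.condKernel y)) ∂ρ.fst
      = ∫ p, (∑ j, (p.2.1 j)^2 + ∑ j, (p.2.2 j)^2) ∂ρ := Measure.integral_condKernel hq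
  have hsec : ∀ᵐ y ∂ρ.fst,
      Integrable (fun z : (Fin m → ℝ) × (Fin m → ℝ) => ∑ j, (z.1 j)^2 + ∑ j, (z.2 j)^2)
        (ρ.condKernel y) := hq.condKernel_ae
  have hJ : ∀ᵐ y ∂ρ.fst, (∑ j, (v₁ y j)^2 + ∑ j, (v₂ y j)^2)
      ≤ ∫ z, (∑ j, (z.1 j)^2 + ∑ j, (z.2 j)^2) ∂(ρ.condKernel y) := by
    filter_upwards [hsec] with y hy
    exact (coord_facts _ hy).2.2
  have hWmeas : Measurable fun y => ∑ j, (v₁ y j)^2 + ∑ j, (v₂ y j)^2 :=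
    (Finset.measurable_sum _ fun j _ => ((measurable_pi_apply j).comp hmv₁).pow_const 2).add
      (Finset.measurable_sum _ fun j _ => ((measurable_pi_apply j).comp hmv₂).pow_const 2)
  have hWint : Integrable (fun y => ∑ j, (v₁ y j)^2 + ∑ j, (v₂ y j)^2) ρ.fst := by
    refine hGint.mono' hWmeas.aestronglyMeasurable ?_
    filter_upwards [hJ] with y hy
    rw [Real.norm_eq_abs, abs_of_nonneg (by positivity)]
    exact hy
  refine ⟨ρ.fst, v₁, v₂, inferInstance, hmv₁, hmv₂, hWint, ?_, ?_, ?_, ?_⟩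
  · intro F hF
    obtain ⟨hFi, hF0⟩ := hL F hF
    have hfF : Integrable (fun p : (Fin d → ℝ) × ((Fin m → ℝ) × (Fin m → ℝ)) => L F p.1) ρ :=
      (integrable_map_equiv T _).2 hFi
    have hkey : (fun y => ∫ z, L F ((y, z) : (Fin d → ℝ) ×
        ((Fin m → ℝ) × (Fin m → ℝ))).1 ∂(ρ.condKernel y)) = fun y => L F y := by
      funext y
      simp [integral_const, measure_univ]
    constructor
    · have := hfF.integral_condKernel
      rwa [hkey] at this
    · have h1 := Measure.integral_condKernel hfF
      have h2 : ∫ p, L F p.1 ∂ρ = ∫ w, L F w.2.2 ∂P := integral_map_equiv T _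
      rw [hkey] at h1
      rw [h1, h2, hF0]
  · intro i
    have hfρ : Integrable (fun p : (Fin d → ℝ) × ((Fin m → ℝ) × (Fin m → ℝ)) =>
        θ p.1 p.2.1 p.2.2 i) ρ := (integrable_map_equiv T _).2 (hθi i)
    have hae : (fun y => ∫ z, θ ((y, z) : (Fin d → ℝ) × ((Fin m → ℝ) × (Fin m → ℝ))).1
        (y, z).2.1 (y, z).2.2 i ∂(ρ.condKernel y)) =ᵐ[ρ.fst]
        fun y => θ y (v₁ y) (v₂ y) i := by
      filter_upwards [hsec] with y hy
      obtain ⟨hz1, hz2, -⟩ := coord_facts _ hy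
      have hrw : (fun z : (Fin m → ℝ) × (Fin m → ℝ) => θ y z.1 z.2 i)
          = fun z => θ₀ y i + ∑ j, θ₁ y i j * z.1 j + ∑ j, θ₂ y i j * z.2 j := by
        funext z
        rw [hθ]
        simp [Matrix.mulVec, dotProduct]
      show ∫ z, θ y z.1 z.2 i ∂(ρ.condKernel y) = _
      rw [hrw, integral_affine _ hz1 hz2, hθ]
      simp [Matrix.mulVec, dotProduct, hv₁def, hv₂def]
    exact hfρ.integral_condKernel.congr hae
  · intro i
    have hfρ : Integrable (fun p : (Fin d → ℝ) × ((Fin m → ℝ) × (Fin m → ℝ)) =>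
        θ p.1 p.2.1 p.2.2 i) ρ := (integrable_map_equiv T _).2 (hθi i)
    have hae : (fun y => ∫ z, θ ((y, z) : (Fin d → ℝ) × ((Fin m → ℝ) × (Fin m → ℝ))).1
        (y, z).2.1 (y, z).2.2 i ∂(ρ.condKernel y)) =ᵐ[ρ.fst]
        fun y => θ y (v₁ y) (v₂ y) i := by
      filter_upwards [hsec] with y hy
      obtain ⟨hz1, hz2, -⟩ := coord_facts _ hy
      have hrw : (fun z : (Fin m → ℝ) × (Fin m → ℝ) => θ y z.1 z.2 i)
          = fun z => θ₀ y i + ∑ j, θ₁ y i j * z.1 j + ∑ j, θ₂ y i j * z.2 j := by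
        funext z
        rw [hθ]
        simp [Matrix.mulVec, dotProduct]
      show ∫ z, θ y z.1 z.2 i ∂(ρ.condKernel y) = _
      rw [hrw, integral_affine _ hz1 hz2, hθ]
      simp [Matrix.mulVec, dotProduct, hv₁def, hv₂def]
    have h1 := Measure.integral_condKernel hfρ
    have h2 : ∫ p, θ p.1 p.2.1 p.2.2 i ∂ρ = ∫ w, θ w.2.2 w.1 w.2.1 i ∂P :=
      integral_map_equiv T _
    rw [hθe i, ← h2, ← h1]
    exact integral_congr_ae hae
  · have hle : ∫ y, (∑ j, (v₁ y j)^2 + ∑ j, (v₂ y j)^2) ∂ρ.fst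
        ≤ ∫ p, (∑ j, (p.2.1 j)^2 + ∑ j, (p.2.2 j)^2) ∂ρ := by
      rw [← hGeq]
      exact integral_mono_ae hWint hGint hJ
    rw [← hqe]
    linarith

theorem stmt13 {n m d : ℕ}
    (L : ((Fin d → ℝ) → ℝ) → ((Fin d → ℝ) → ℝ))
    (𝒞 : Set ((Fin d → ℝ) → ℝ))
    (θ : (Fin d → ℝ) → (Fin m → ℝ) → (Fin m → ℝ) → (Fin n → ℝ))
    (haff : ∃ (θ₀ : (Fin d → ℝ) → Fin n → ℝ)
        (θ₁ θ₂ : (Fin d → ℝ) → Matrix (Fin n) (Fin m) ℝ),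
      ∀ y z₁ z₂, θ y z₁ z₂ = θ₀ y + θ₁ y *ᵥ z₁ + θ₂ y *ᵥ z₂)
    (β : Fin n → ℝ) :
    sInf {c : ℝ | ∃ P : Measure ((Fin m → ℝ) × (Fin m → ℝ) × (Fin d → ℝ)),
        IsProbabilityMeasure P ∧
        Integrable (fun w => ∑ j, (w.1 j)^2 + ∑ j, (w.2.1 j)^2) P ∧
        (∀ F ∈ 𝒞, Integrable (fun w => L F w.2.2) P ∧ ∫ w, L F w.2.2 ∂P = 0) ∧
        (∀ i, Integrable (fun w => θ w.2.2 w.1 w.2.1 i) P) ∧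
        (∀ i, β i = ∫ w, θ w.2.2 w.1 w.2.1 i ∂P) ∧
        c = (1/2) * ∫ w, (∑ j, (w.1 j)^2 + ∑ j, (w.2.1 j)^2) ∂P}
    = sInf {c : ℝ | ∃ (μ : Measure (Fin d → ℝ))
          (v₁ v₂ : (Fin d → ℝ) → (Fin m → ℝ)),
        IsProbabilityMeasure μ ∧ Measurable v₁ ∧ Measurable v₂ ∧
        Integrable (fun y => ∑ j, (v₁ y j)^2 + ∑ j, (v₂ y j)^2) μ ∧
        (∀ F ∈ 𝒞, Integrable (fun y => L F y) μ ∧ ∫ y, L F y ∂μ = 0) ∧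
        (∀ i, Integrable (fun y => θ y (v₁ y) (v₂ y) i) μ) ∧
        (∀ i, β i = ∫ y, θ y (v₁ y) (v₂ y) i ∂μ) ∧
        c = (1/2) * ∫ y, (∑ j, (v₁ y j)^2 + ∑ j, (v₂ y j)^2) ∂μ} := by
  obtain ⟨θ₀, θ₁, θ₂, hθ⟩ := haff
  set A := {c : ℝ | ∃ P : Measure ((Fin m → ℝ) × (Fin m → ℝ) × (Fin d → ℝ)),
        IsProbabilityMeasure P ∧
        Integrable (fun w => ∑ j, (w.1 j)^2 + ∑ j, (w.2.1 j)^2) P ∧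
        (∀ F ∈ 𝒞, Integrable (fun w => L F w.2.2) P ∧ ∫ w, L F w.2.2 ∂P = 0) ∧
        (∀ i, Integrable (fun w => θ w.2.2 w.1 w.2.1 i) P) ∧
        (∀ i, β i = ∫ w, θ w.2.2 w.1 w.2.1 i ∂P) ∧
        c = (1/2) * ∫ w, (∑ j, (w.1 j)^2 + ∑ j, (w.2.1 j)^2) ∂P} with hAdef
  set B := {c : ℝ | ∃ (μ : Measure (Fin d → ℝ))
          (v₁ v₂ : (Fin d → ℝ) → (Fin m → ℝ)),
        IsProbabilityMeasure μ ∧ Measurable v₁ ∧ Measurable v₂ ∧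
        Integrable (fun y => ∑ j, (v₁ y j)^2 + ∑ j, (v₂ y j)^2) μ ∧
        (∀ F ∈ 𝒞, Integrable (fun y => L F y) μ ∧ ∫ y, L F y ∂μ = 0) ∧
        (∀ i, Integrable (fun y => θ y (v₁ y) (v₂ y) i) μ) ∧
        (∀ i, β i = ∫ y, θ y (v₁ y) (v₂ y) i ∂μ) ∧
        c = (1/2) * ∫ y, (∑ j, (v₁ y j)^2 + ∑ j, (v₂ y j)^2) ∂μ} with hBdef
  have hAnn : ∀ c ∈ A, (0:ℝ) ≤ c := by
    rintro c ⟨P, hP, _, _, _, _, rfl⟩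
    have : 0 ≤ ∫ w, (∑ j, (w.1 j)^2 + ∑ j, (w.2.1 j)^2) ∂P :=
      integral_nonneg fun w => by positivity
    linarith
  have hBnn : ∀ c ∈ B, (0:ℝ) ≤ c := by
    rintro c ⟨μ, v₁, v₂, hμ, _, _, _, _, _, _, rfl⟩
    have : 0 ≤ ∫ y, (∑ j, (v₁ y j)^2 + ∑ j, (v₂ y j)^2) ∂μ :=
      integral_nonneg fun y => by positivity
    linarith
  have hBA : ∀ c ∈ B, c ∈ A := by
    rintro c ⟨μ, v₁, v₂, hμ, hm1, hm2, hint, hLc, hθi, hθe, hceq⟩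
    haveI := hμ
    set g : (Fin d → ℝ) → ((Fin m → ℝ) × (Fin m → ℝ) × (Fin d → ℝ)) :=
      fun y => (v₁ y, v₂ y, y) with hgdef
    have hg : Measurable g := hm1.prodMk (hm2.prodMk measurable_id)
    have hinj : Function.Injective g := fun a b h => by
      simpa using congrArg (fun w : (Fin m → ℝ) × (Fin m → ℝ) × (Fin d → ℝ) => w.2.2) h
    have hemb : MeasurableEmbedding g := hg.measurableEmbedding hinj
    refine ⟨μ.map g, Measure.isProbabilityMeasure_map hg.aemeasurable, ?_, ?_, ?_, ?_, ?_⟩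
    · exact hemb.integrable_map_iff.2 hint
    · intro F hF
      exact ⟨hemb.integrable_map_iff.2 (hLc F hF).1,
        by rw [hemb.integral_map]; exact (hLc F hF).2⟩
    · intro i
      exact hemb.integrable_map_iff.2 (hθi i)
    · intro i
      rw [hemb.integral_map]
      exact hθe i
    · rw [hemb.integral_map]
      exact hceq
  have hAB : ∀ c ∈ A, ∃ c' ∈ B, c' ≤ c := by
    rintro c ⟨P, hP, hI2, hLc, hθi, hθe, hceq⟩
    obtain ⟨μ, v₁, v₂, h1, h2, h3, h4, h5, h6, h7, h8⟩ :=
      hard_dir L 𝒞 θ θ₀ θ₁ θ₂ hθ β P hP hI2 hLc hθi hθe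
    exact ⟨(1/2) * ∫ y, (∑ j, (v₁ y j)^2 + ∑ j, (v₂ y j)^2) ∂μ,
      ⟨μ, v₁, v₂, h1, h2, h3, h4, h5, h6, h7, rfl⟩, hceq ▸ h8⟩
  by_cases hA : A.Nonempty
  · obtain ⟨c₀, hc₀⟩ := hA
    obtain ⟨c₀', hc₀', _⟩ := hAB c₀ hc₀
    apply le_antisymm
    · exact le_csInf ⟨c₀', hc₀'⟩ fun c hc => csInf_le ⟨0, hAnn⟩ (hBA c hc)
    · refine le_csInf ⟨c₀, hc₀⟩ fun c hc => ?_
      obtain ⟨c', hc', hle⟩ := hAB c hc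
      exact (csInf_le ⟨0, hBnn⟩ hc').trans hle
  · have hA' : A = ∅ := Set.not_nonempty_iff_eq_empty.mp hA
    have hB' : B = ∅ := by
      rw [Set.eq_empty_iff_forall_notMem]
      intro c hc
      exact hA ⟨c, hBA c hc⟩
    rw [hA', hB']
end
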